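/- Let f_W be an n-layer ReLU network with weight matrices W_1, …, W_n, each nonzero, and let U_1, …, U_n be matrices of the same respective dimensions satisfying ‖U_l‖₂ ≤ (1/n)·‖W_l‖₂ for every l. Let B > 0 and let x be an input with ‖x‖₂ ≤ B. Then for all output indices i, j, | M(f_{W+U}(x), i, j) − M(f_W(x), i, j) | ≤ 2e · B · (∏_{l=1}^{n} ‖W_l‖₂) · Σ_{l=1}^{n} ‖U_l‖₂ / ‖W_l‖₂. -/

import Mathlib

open Matrix

set_option maxHeartbeats 1000000

/-- The spectral norm of a real matrix: its operator norm as a map between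
Euclidean (`ℓ²`) spaces. -/
noncomputable def specNorm {m k : ℕ} (A : Matrix (Fin m) (Fin k) ℝ) : ℝ :=
  ‖LinearMap.toContinuousLinearMap (Matrix.toEuclideanLin A)‖

/-- The Euclidean (`ℓ²`) norm of a vector in `ℝ^k`. -/
noncomputable def vnorm {k : ℕ} (v : Fin k → ℝ) : ℝ :=
  Real.sqrt (∑ i, (v i) ^ 2)

/-- Coordinatewise ReLU activation. -/
def relu {k : ℕ} (v : Fin k → ℝ) : Fin k → ℝ := fun i => max (v i) 0

/-- `actStack n d W x = act(W_n · act(W_{n-1} · ⋯ · act(W_1 · x)))`: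
the activated output after `n` layers (activation applied after every layer). -/
def actStack : (n : ℕ) → (d : Fin (n + 1) → ℕ) →
    ((l : Fin n) → Matrix (Fin (d l.succ)) (Fin (d l.castSucc)) ℝ) →
    (Fin (d 0) → ℝ) → (Fin (d (Fin.last n)) → ℝ)
  | 0, _, _, x => x
  | n + 1, d, W, x =>
      relu ((W (Fin.last n)) *ᵥ
        actStack n (fun l => d l.castSucc) (fun l => W l.castSucc) x)

/-- The `n`-layer ReLU network with weight matrices `W_1, …, W_n`:
`f_W(x) = W_n · act(W_{n-1} · ⋯ · act(W_1 · x) ⋯)` (no activation on the last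
layer). For `n = 0` it is the identity. -/
def reluNet : (n : ℕ) → (d : Fin (n + 1) → ℕ) →
    ((l : Fin n) → Matrix (Fin (d l.succ)) (Fin (d l.castSucc)) ℝ) →
    (Fin (d 0) → ℝ) → (Fin (d (Fin.last n)) → ℝ)
  | 0, _, _, x => x
  | n + 1, d, W, x =>
      (W (Fin.last n)) *ᵥ
        actStack n (fun l => d l.castSucc) (fun l => W l.castSucc) x


noncomputable def toE {k : ℕ} (v : Fin k → ℝ) : EuclideanSpace ℝ (Fin k) :=
  (WithLp.equiv 2 (Fin k → ℝ)).symm v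

lemma vnorm_eq_norm {k : ℕ} (v : Fin k → ℝ) : vnorm v = ‖toE v‖ := by
  rw [EuclideanSpace.norm_eq]
  simp [vnorm, toE, Real.norm_eq_abs, sq_abs]

lemma vnorm_nonneg {k : ℕ} (v : Fin k → ℝ) : 0 ≤ vnorm v := Real.sqrt_nonneg _

lemma specNorm_nonneg {m k : ℕ} (A : Matrix (Fin m) (Fin k) ℝ) : 0 ≤ specNorm A :=
  norm_nonneg _

lemma vnorm_mulVec_le {m k : ℕ} (A : Matrix (Fin m) (Fin k) ℝ) (v : Fin k → ℝ) :
    vnorm (A *ᵥ v) ≤ specNorm A * vnorm v := by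
  rw [vnorm_eq_norm, vnorm_eq_norm]
  have h := (LinearMap.toContinuousLinearMap (Matrix.toEuclideanLin A)).le_opNorm (toE v)
  have he : (LinearMap.toContinuousLinearMap (Matrix.toEuclideanLin A)) (toE v) = toE (A *ᵥ v) := by
    simp only [LinearMap.coe_toContinuousLinearMap']
    exact Matrix.toEuclideanLin_apply_piLp_toLp A v
  rwa [he] at h

lemma specNorm_add_le {m k : ℕ} (A B : Matrix (Fin m) (Fin k) ℝ) :
    specNorm (A + B) ≤ specNorm A + specNorm B := by
  unfold specNorm
  rw [map_add, map_add]
  exact norm_add_le _ _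

lemma specNorm_pos {m k : ℕ} {A : Matrix (Fin m) (Fin k) ℝ} (hA : A ≠ 0) :
    0 < specNorm A := by
  rw [specNorm, norm_pos_iff]
  intro h
  apply hA
  have h1 : Matrix.toEuclideanLin A = 0 :=
    LinearMap.toContinuousLinearMap.injective (by simpa using h)
  exact Matrix.toEuclideanLin.injective (by simpa using h1)

lemma vnorm_mono {k : ℕ} {u v : Fin k → ℝ} (h : ∀ i, |u i| ≤ |v i|) :
    vnorm u ≤ vnorm v := by
  unfold vnorm
  apply Real.sqrt_le_sqrt
  apply Finset.sum_le_sum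
  intro i _
  rw [← sq_abs (u i), ← sq_abs (v i)]
  exact pow_le_pow_left₀ (abs_nonneg _) (h i) 2

lemma vnorm_relu_sub_relu {k : ℕ} (u v : Fin k → ℝ) :
    vnorm (relu u - relu v) ≤ vnorm (u - v) := by
  apply vnorm_mono
  intro i
  simp only [Pi.sub_apply, relu]
  exact abs_max_sub_max_le_abs _ _ _

lemma vnorm_relu_le {k : ℕ} (v : Fin k → ℝ) : vnorm (relu v) ≤ vnorm v := by
  apply vnorm_mono
  intro i
  simp only [relu]
  rw [abs_of_nonneg (le_max_right _ _)]
  exact max_le (le_abs_self _) (abs_nonneg _)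

lemma vnorm_add_le {k : ℕ} (u v : Fin k → ℝ) : vnorm (u + v) ≤ vnorm u + vnorm v := by
  rw [vnorm_eq_norm, vnorm_eq_norm, vnorm_eq_norm]
  exact norm_add_le (toE u) (toE v)

lemma abs_apply_le_vnorm {k : ℕ} (v : Fin k → ℝ) (i : Fin k) : |v i| ≤ vnorm v := by
  rw [vnorm, ← Real.sqrt_sq_eq_abs]
  exact Real.sqrt_le_sqrt (Finset.single_le_sum (fun j _ => sq_nonneg (v j)) (Finset.mem_univ i))

lemma actStack_vnorm_le : ∀ (n : ℕ) (d : Fin (n + 1) → ℕ)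
    (W : (l : Fin n) → Matrix (Fin (d l.succ)) (Fin (d l.castSucc)) ℝ)
    (x : Fin (d 0) → ℝ),
    vnorm (actStack n d W x) ≤ (∏ l, specNorm (W l)) * vnorm x
  | 0, d, W, x => by simp [actStack]
  | n + 1, d, W, x => by
    rw [actStack]
    set a := actStack n (fun l => d l.castSucc) (fun l => W l.castSucc) x with ha
    calc vnorm (relu (W (Fin.last n) *ᵥ a)) ≤ vnorm (W (Fin.last n) *ᵥ a) :=
          vnorm_relu_le _
      _ ≤ specNorm (W (Fin.last n)) * vnorm a := vnorm_mulVec_le _ _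
      _ ≤ specNorm (W (Fin.last n)) * ((∏ l : Fin n, specNorm (W l.castSucc)) * vnorm x) := by
          have := actStack_vnorm_le n (fun l => d l.castSucc) (fun l => W l.castSucc) x
          exact mul_le_mul_of_nonneg_left this (specNorm_nonneg _)
      _ = (∏ l, specNorm (W l)) * vnorm x := by
          rw [Fin.prod_univ_castSucc]; ring


lemma layer_bound {m k : ℕ} (WL UL : Matrix (Fin m) (Fin k) ℝ) (a' a : Fin k → ℝ) :
    vnorm (relu ((WL + UL) *ᵥ a') - relu (WL *ᵥ a)) ≤
      specNorm (WL + UL) * vnorm (a' - a) + specNorm UL * vnorm a := by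
  have key : (WL + UL) *ᵥ a' - WL *ᵥ a = (WL + UL) *ᵥ (a' - a) + UL *ᵥ a := by
    rw [Matrix.mulVec_sub, Matrix.add_mulVec, Matrix.add_mulVec]; abel
  calc vnorm (relu ((WL + UL) *ᵥ a') - relu (WL *ᵥ a))
      ≤ vnorm ((WL + UL) *ᵥ a' - WL *ᵥ a) := vnorm_relu_sub_relu _ _
    _ = vnorm ((WL + UL) *ᵥ (a' - a) + UL *ᵥ a) := by rw [key]
    _ ≤ vnorm ((WL + UL) *ᵥ (a' - a)) + vnorm (UL *ᵥ a) := vnorm_add_le _ _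
    _ ≤ specNorm (WL + UL) * vnorm (a' - a) + specNorm UL * vnorm a :=
        add_le_add (vnorm_mulVec_le _ _) (vnorm_mulVec_le _ _)

lemma layer_bound' {m k : ℕ} (WL UL : Matrix (Fin m) (Fin k) ℝ) (a' a : Fin k → ℝ) :
    vnorm ((WL + UL) *ᵥ a' - WL *ᵥ a) ≤
      specNorm (WL + UL) * vnorm (a' - a) + specNorm UL * vnorm a := by
  have key : (WL + UL) *ᵥ a' - WL *ᵥ a = (WL + UL) *ᵥ (a' - a) + UL *ᵥ a := by
    rw [Matrix.mulVec_sub, Matrix.add_mulVec, Matrix.add_mulVec]; abel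
  calc vnorm ((WL + UL) *ᵥ a' - WL *ᵥ a)
      = vnorm ((WL + UL) *ᵥ (a' - a) + UL *ᵥ a) := by rw [key]
    _ ≤ vnorm ((WL + UL) *ᵥ (a' - a)) + vnorm (UL *ᵥ a) := vnorm_add_le _ _
    _ ≤ specNorm (WL + UL) * vnorm (a' - a) + specNorm UL * vnorm a :=
        add_le_add (vnorm_mulVec_le _ _) (vnorm_mulVec_le _ _)

lemma arith_step (Q P S X w u : ℝ) (hPQ : P ≤ Q) (hQ0 : 0 ≤ Q) (hP0 : 0 ≤ P)
    (hS0 : 0 ≤ S) (hX0 : 0 ≤ X) (hw : 0 < w) (hu : 0 ≤ u) :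
    (w + u) * (Q * X * S) + u * (P * X) ≤ Q * (w + u) * X * (S + u / w) := by
  have hr0 : 0 ≤ u / w := div_nonneg hu hw.le
  have e1 : Q * w * X * (u / w) = Q * X * u := by field_simp
  have h1 : u * (P * X) ≤ Q * (w + u) * X * (u / w) := by
    calc u * (P * X) = P * X * u := by ring
      _ ≤ Q * X * u := by gcongr
      _ = Q * w * X * (u / w) := e1.symm
      _ ≤ Q * (w + u) * X * (u / w) := by gcongr; linarith
  have expand : Q * (w + u) * X * (S + u / w) =
      Q * (w + u) * X * S + Q * (w + u) * X * (u / w) := by ring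
  linarith [h1, expand]

lemma actStack_perturb_le : ∀ (n : ℕ) (d : Fin (n + 1) → ℕ)
    (W U : (l : Fin n) → Matrix (Fin (d l.succ)) (Fin (d l.castSucc)) ℝ)
    (_hW : ∀ l, W l ≠ 0) (x : Fin (d 0) → ℝ),
    vnorm (actStack n d (fun l => W l + U l) x - actStack n d W x) ≤
      (∏ l, (specNorm (W l) + specNorm (U l))) * vnorm x *
        ∑ l, specNorm (U l) / specNorm (W l)
  | 0, d, W, U, hW, x => by
    have h0 : actStack 0 d (fun l => W l + U l) x - actStack 0 d W x = 0 :=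
      sub_self x
    rw [h0]
    simp [vnorm]
  | n + 1, d, W, U, hW, x => by
    simp only [actStack]
    refine le_trans (layer_bound (W (Fin.last n)) (U (Fin.last n)) _ _) ?_
    rw [Fin.prod_univ_castSucc, Fin.sum_univ_castSucc]
    have IH := actStack_perturb_le n (fun l => d l.castSucc)
      (fun l => W l.castSucc) (fun l => U l.castSucc) (fun l => hW l.castSucc) x
    have hA := actStack_vnorm_le n (fun l => d l.castSucc) (fun l => W l.castSucc) x
    have h3 := specNorm_add_le (W (Fin.last n)) (U (Fin.last n))
    refine le_trans (add_le_add
      (mul_le_mul h3 IH (vnorm_nonneg _)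
        (add_nonneg (specNorm_nonneg _) (specNorm_nonneg _)))
      (mul_le_mul_of_nonneg_left hA (specNorm_nonneg _))) ?_
    exact arith_step _ _ _ _ _ _
      (Finset.prod_le_prod (fun l _ => specNorm_nonneg _)
        (fun l _ => le_add_of_nonneg_right (specNorm_nonneg _)))
      (Finset.prod_nonneg fun l _ => add_nonneg (specNorm_nonneg _) (specNorm_nonneg _))
      (Finset.prod_nonneg fun l _ => specNorm_nonneg _)
      (Finset.sum_nonneg fun l _ => div_nonneg (specNorm_nonneg _) (specNorm_nonneg _))
      (vnorm_nonneg x) (specNorm_pos (hW (Fin.last n))) (specNorm_nonneg _)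

lemma reluNet_perturb_le (n : ℕ) (d : Fin (n + 1) → ℕ)
    (W U : (l : Fin n) → Matrix (Fin (d l.succ)) (Fin (d l.castSucc)) ℝ)
    (hW : ∀ l, W l ≠ 0) (x : Fin (d 0) → ℝ) :
    vnorm (reluNet n d (fun l => W l + U l) x - reluNet n d W x) ≤
      (∏ l, (specNorm (W l) + specNorm (U l))) * vnorm x *
        ∑ l, specNorm (U l) / specNorm (W l) := by
  cases n with
  | zero =>
    have h0 : reluNet 0 d (fun l => W l + U l) x - reluNet 0 d W x = 0 := sub_self x
    rw [h0]; simp [vnorm]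
  | succ n =>
    simp only [reluNet]
    refine le_trans (layer_bound' (W (Fin.last n)) (U (Fin.last n)) _ _) ?_
    rw [Fin.prod_univ_castSucc, Fin.sum_univ_castSucc]
    have IH := actStack_perturb_le n (fun l => d l.castSucc)
      (fun l => W l.castSucc) (fun l => U l.castSucc) (fun l => hW l.castSucc) x
    have hA := actStack_vnorm_le n (fun l => d l.castSucc) (fun l => W l.castSucc) x
    have h3 := specNorm_add_le (W (Fin.last n)) (U (Fin.last n))
    refine le_trans (add_le_add
      (mul_le_mul h3 IH (vnorm_nonneg _)
        (add_nonneg (specNorm_nonneg _) (specNorm_nonneg _)))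
      (mul_le_mul_of_nonneg_left hA (specNorm_nonneg _))) ?_
    exact arith_step _ _ _ _ _ _
      (Finset.prod_le_prod (fun l _ => specNorm_nonneg _)
        (fun l _ => le_add_of_nonneg_right (specNorm_nonneg _)))
      (Finset.prod_nonneg fun l _ => add_nonneg (specNorm_nonneg _) (specNorm_nonneg _))
      (Finset.prod_nonneg fun l _ => specNorm_nonneg _)
      (Finset.sum_nonneg fun l _ => div_nonneg (specNorm_nonneg _) (specNorm_nonneg _))
      (vnorm_nonneg x) (specNorm_pos (hW (Fin.last n))) (specNorm_nonneg _)


/-- margin-operator perturbation bound, Lemma A.2 part 1: if every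
`W_l ≠ 0`, `‖U_l‖₂ ≤ (1/n)‖W_l‖₂`, `B > 0` and `‖x‖₂ ≤ B`, then for all output
indices `i, j`,
`|M(f_{W+U}(x), i, j) - M(f_W(x), i, j)| ≤ 2e·B·(∏_l ‖W_l‖₂)·∑_l ‖U_l‖₂/‖W_l‖₂`,
where `M(v, i, j) = v_i - v_j`. -/
theorem margin_reluNet_perturb_le {n : ℕ} (hn : 1 ≤ n) (d : Fin (n + 1) → ℕ)
    (W U : (l : Fin n) → Matrix (Fin (d l.succ)) (Fin (d l.castSucc)) ℝ)
    (hW : ∀ l, W l ≠ 0)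
    (hU : ∀ l, specNorm (U l) ≤ (1 / (n : ℝ)) * specNorm (W l))
    (B : ℝ) (hB : 0 < B)
    (x : Fin (d 0) → ℝ) (hx : vnorm x ≤ B)
    (i j : Fin (d (Fin.last n))) :
    |(reluNet n d (fun l => W l + U l) x i - reluNet n d (fun l => W l + U l) x j) -
        (reluNet n d W x i - reluNet n d W x j)| ≤
      2 * Real.exp 1 * B * (∏ l, specNorm (W l)) *
        ∑ l, specNorm (U l) / specNorm (W l) := by
  have hn0 : (n : ℝ) ≠ 0 := Nat.cast_ne_zero.mpr (by omega)
  have hD := reluNet_perturb_le n d W U hW x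
  have hS0 : 0 ≤ ∑ l, specNorm (U l) / specNorm (W l) :=
    Finset.sum_nonneg fun l _ => div_nonneg (specNorm_nonneg _) (specNorm_nonneg _)
  have hP0 : 0 ≤ ∏ l, specNorm (W l) := Finset.prod_nonneg fun l _ => specNorm_nonneg _
  have hQle : (∏ l, (specNorm (W l) + specNorm (U l))) ≤
      Real.exp 1 * ∏ l, specNorm (W l) := by
    calc ∏ l, (specNorm (W l) + specNorm (U l))
        ≤ ∏ l, (specNorm (W l) * Real.exp (1 / (n : ℝ))) := by
          apply Finset.prod_le_prod
            (fun l _ => add_nonneg (specNorm_nonneg _) (specNorm_nonneg _))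
          intro l _
          have h1 := hU l
          have h2 : (1 / (n : ℝ)) + 1 ≤ Real.exp (1 / (n : ℝ)) := Real.add_one_le_exp _
          have hw := (specNorm_pos (hW l)).le
          nlinarith
      _ = (∏ l, specNorm (W l)) * Real.exp (1 / (n : ℝ)) ^ n := by
          rw [Finset.prod_mul_distrib, Finset.prod_const, Finset.card_univ,
            Fintype.card_fin]
      _ = Real.exp 1 * ∏ l, specNorm (W l) := by
          rw [← Real.exp_nat_mul, mul_one_div, div_self hn0]
          ring
  set v := reluNet n d (fun l => W l + U l) x with hv
  set w := reluNet n d W x with hw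
  have habs : ∀ k, |v k - w k| ≤ vnorm (v - w) := fun k => abs_apply_le_vnorm (v - w) k
  calc |(v i - v j) - (w i - w j)|
      = |(v i - w i) - (v j - w j)| := by ring_nf
    _ ≤ |v i - w i| + |v j - w j| := abs_sub _ _
    _ ≤ 2 * vnorm (v - w) := by linarith [habs i, habs j]
    _ ≤ 2 * ((∏ l, (specNorm (W l) + specNorm (U l))) * vnorm x *
          ∑ l, specNorm (U l) / specNorm (W l)) := by linarith [hD]
    _ ≤ 2 * ((Real.exp 1 * ∏ l, specNorm (W l)) * B *
          ∑ l, specNorm (U l) / specNorm (W l)) := by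
        have hstep : (∏ l, (specNorm (W l) + specNorm (U l))) * vnorm x ≤
            (Real.exp 1 * ∏ l, specNorm (W l)) * B :=
          mul_le_mul hQle hx (vnorm_nonneg x)
            (mul_nonneg (Real.exp_pos 1).le hP0)
        have := mul_le_mul_of_nonneg_right hstep hS0
        linarith
    _ = 2 * Real.exp 1 * B * (∏ l, specNorm (W l)) *
          ∑ l, specNorm (U l) / specNorm (W l) := by ring
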